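/- arXiv:1510.05433 — 2 statements merged into one kernel-verified Lean document; each statement's English description precedes it below -/
import Mathlib

section
/- Suppose p - 1 separators split a sorted sequence I into p parts with consecutive separators at distance at most |I|/p, and another p - 1 separators split a sorted sequence T into p parts with consecutive separators at distance at most |T|/p. Then refining both sequences by the union of all 2(p-1) separators produces at most 2p - 1 parts of I each of size at most |I|/p, and at most 2p - 1 parts of T each of size at most |T|/p. -/
open Finset

variable {α : Type*} [LinearOrder α] [DecidableEq α]

/-- The part of `I` belonging to separator `x` w.r.t. a separator set `X`:
elements `≤ x` that are greater than every separator of `X` below `x`. -/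
def sepPart (I X : Finset α) (x : α) : Finset α :=
  I.filter (fun e => e ≤ x ∧ ∀ y ∈ X, y < x → y < e)

/-- The part of `I` above all separators of `X`. -/
def topPart (I X : Finset α) : Finset α :=
  I.filter (fun e => ∀ y ∈ X, y < e)

lemma sepPart_refine (I X X' : Finset α) (hX : X ⊆ X') (x : α) :
    (∃ s ∈ X, sepPart I X' x ⊆ sepPart I X s) ∨ sepPart I X' x ⊆ topPart I X := by
  by_cases h : ∃ s ∈ X, x ≤ s
  · left
    set F := X.filter (fun s => x ≤ s) with hF
    have hFne : F.Nonempty := by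
      obtain ⟨s, hs, hxs⟩ := h
      exact ⟨s, by simp [hF, hs, hxs]⟩
    set m := F.min' hFne with hm
    have hmF : m ∈ F := F.min'_mem hFne
    have hmX : m ∈ X := (Finset.mem_filter.1 hmF).1
    have hxm : x ≤ m := (Finset.mem_filter.1 hmF).2
    refine ⟨m, hmX, fun e he => ?_⟩
    simp only [sepPart, Finset.mem_filter] at he ⊢
    obtain ⟨heI, hex, hlt⟩ := he
    refine ⟨heI, hex.trans hxm, fun y hy hym => ?_⟩
    have hyx : y < x := by
      by_contra hc
      push_neg at hc
      have : m ≤ y := F.min'_le y (Finset.mem_filter.2 ⟨hy, hc⟩)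
      exact absurd hym (not_lt.2 this)
    exact hlt y (hX hy) hyx
  · right
    push_neg at h
    intro e he
    simp only [sepPart, Finset.mem_filter] at he
    simp only [topPart, Finset.mem_filter]
    exact ⟨he.1, fun y hy => he.2.2 y (hX hy) (h y hy)⟩

lemma topPart_refine (I X X' : Finset α) (hX : X ⊆ X') :
    topPart I X' ⊆ topPart I X := by
  intro e he
  simp only [topPart, Finset.mem_filter] at he ⊢
  exact ⟨he.1, fun y hy => he.2 y (hX hy)⟩

lemma sepPart_bound (I X X' : Finset α) (hX : X ⊆ X') (x : α) (n : ℕ)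
    (hparts : ∀ s ∈ X, (sepPart I X s).card ≤ n) (htop : (topPart I X).card ≤ n) :
    (sepPart I X' x).card ≤ n := by
  rcases sepPart_refine I X X' hX x with ⟨s, hs, hsub⟩ | hsub
  · exact le_trans (Finset.card_le_card hsub) (hparts s hs)
  · exact le_trans (Finset.card_le_card hsub) htop

/-- If `p - 1` separators `S` split `I` into `p` parts of size at most `|I|/p`, and
`p - 1` separators `Tsep` split `T` into `p` parts of size at most `|T|/p`, then the
refinement by `S ∪ Tsep` yields at most `2p - 1` parts, each part of `I` of size at
most `|I|/p` and each part of `T` of size at most `|T|/p`. -/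
theorem double_binary_search_parts (p : ℕ) (hp : 1 ≤ p)
    (I T S Tsep : Finset α)
    (hS : S.card = p - 1) (hTsep : Tsep.card = p - 1)
    (hIparts : ∀ x ∈ S, (sepPart I S x).card ≤ I.card / p)
    (hItop : (topPart I S).card ≤ I.card / p)
    (hTparts : ∀ x ∈ Tsep, (sepPart T Tsep x).card ≤ T.card / p)
    (hTtop : (topPart T Tsep).card ≤ T.card / p) :
    (S ∪ Tsep).card + 1 ≤ 2 * p - 1 ∧
    (∀ x ∈ S ∪ Tsep,
      (sepPart I (S ∪ Tsep) x).card ≤ I.card / p ∧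
      (sepPart T (S ∪ Tsep) x).card ≤ T.card / p) ∧
    (topPart I (S ∪ Tsep)).card ≤ I.card / p ∧
    (topPart T (S ∪ Tsep)).card ≤ T.card / p := by
  have hSle : S ⊆ S ∪ Tsep := Finset.subset_union_left
  have hTle : Tsep ⊆ S ∪ Tsep := Finset.subset_union_right
  refine ⟨?_, fun x _ => ⟨?_, ?_⟩, ?_, ?_⟩
  · have := Finset.card_union_le S Tsep
    omega
  · exact sepPart_bound I S (S ∪ Tsep) hSle x _ hIparts hItop
  · exact sepPart_bound T Tsep (S ∪ Tsep) hTle x _ hTparts hTtop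
  · exact le_trans (Finset.card_le_card (topPart_refine I S (S ∪ Tsep) hSle)) hItop
  · exact le_trans (Finset.card_le_card (topPart_refine T Tsep (S ∪ Tsep) hTle)) hTtop
end

section
/- Suppose a stack S_U stores pairs (R_i, I_i) whose intervals are pairwise disjoint, sorted, and cover [1, r(U)], and a stack S_V stores pairs whose intervals are pairwise disjoint, sorted, and cover [1, r(V)] with r(V) ≤ r(U). Pop pairs from S_U until the remaining top pair has interval [r_j, r_{j+1} - 1] containing r(V); replace that top pair's interval by [r(V)+1, r_{j+1}-1] (removing it if empty) and push all pairs of S_V on top. Then the resulting stack stores pairwise disjoint, sorted intervals covering [1, r(U)]. -/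
def StackInv (L : List (ℕ × ℕ)) (r : ℕ) : Prop :=
  (∀ q ∈ L, q.1 ≤ q.2) ∧
  List.Chain' (fun q q' => q'.1 = q.2 + 1) L ∧
  (∃ q, L.head? = some q ∧ q.1 = 1) ∧
  (∃ q, L.getLast? = some q ∧ q.2 = r)

/-- Combining the spine stacks: pop pairs from `S_U` until the top interval `[l, h]`
contains `r(V)`, replace it by `[r(V)+1, h]` (dropping it if empty), and push all of
`S_V` on top.  The resulting stack again stores pairwise disjoint, sorted intervals
covering `[1, r(U)]`. -/
theorem stack_combine_preserves_invariants
    (SU SV popped rest : List (ℕ × ℕ)) (l h rU rV : ℕ)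
    (hU : StackInv SU rU) (hV : StackInv SV rV) (hrVU : rV ≤ rU)
    (hsplit : SU = popped ++ (l, h) :: rest)
    (hpopped : ∀ q ∈ popped, q.2 < rV)
    (hl : l ≤ rV) (hh : rV ≤ h) :
    StackInv (SV ++ (if rV + 1 ≤ h then [(rV + 1, h)] else []) ++ rest) rU := by
  obtain ⟨hU1, hU2, -, qU, hUl, hUl2⟩ := hU
  obtain ⟨hV1, hV2, ⟨qVh, hVh, hVh1⟩, qVl, hVl, hVl2⟩ := hV
  subst hsplit
  rw [List.Chain', List.isChain_append] at hU2
  obtain ⟨-, hU2, -⟩ := hU2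
  rw [List.isChain_cons] at hU2
  obtain ⟨hrest_head, hchain_rest⟩ := hU2
  have hlast : ((l,h)::rest).getLast? = some qU := by
    rw [List.getLast?_append] at hUl
    cases hq : ((l,h)::rest).getLast? with
    | none => simp at hq
    | some q =>
      rw [hq] at hUl
      simp [Option.or] at hUl
      rw [hUl]
  by_cases hcase : rV + 1 ≤ h
  · simp only [if_pos hcase, List.append_assoc, List.singleton_append]
    refine ⟨?_, ?_, ?_, ?_⟩
    · intro q hq
      simp only [List.mem_append, List.mem_cons] at hq
      rcases hq with hq | hq | hq
      · exact hV1 q hq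
      · simp [hq]; omega
      · exact hU1 q (by simp [hq])
    · rw [List.Chain', List.isChain_append]
      refine ⟨hV2, ?_, ?_⟩
      · rw [List.isChain_cons]
        exact ⟨fun y hy => by simpa using hrest_head y hy, hchain_rest⟩
      · intro x hx y hy
        rw [hVl] at hx
        simp at hx hy
        subst hx
        simp [← hy, hVl2]
    · refine ⟨qVh, ?_, hVh1⟩
      rw [List.head?_append, hVh]; rfl
    · rw [List.getLast?_append]
      cases rest with
      | nil =>
        have hq : (l, h) = qU := by simpa using hlast
        exact ⟨(rV+1, h), rfl, by rw [← hUl2, ← hq]⟩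
      | cons r0 rs =>
        rw [List.getLast?_cons_cons] at hlast ⊢
        rw [hlast]
        exact ⟨qU, rfl, hUl2⟩
  · have hEq : h = rV := by omega
    subst hEq
    simp only [if_neg hcase, List.append_nil]
    refine ⟨?_, ?_, ?_, ?_⟩
    · intro q hq
      simp only [List.mem_append] at hq
      rcases hq with hq | hq
      · exact hV1 q hq
      · exact hU1 q (by simp [hq])
    · rw [List.Chain', List.isChain_append]
      refine ⟨hV2, hchain_rest, ?_⟩
      intro x hx y hy
      rw [hVl] at hx
      simp at hx
      subst hx
      rw [hVl2]
      exact hrest_head y hy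
    · refine ⟨qVh, ?_, hVh1⟩
      rw [List.head?_append, hVh]; rfl
    · rw [List.getLast?_append]
      cases rest with
      | nil =>
        have hq : (l, h) = qU := by simpa using hlast
        refine ⟨qVl, ?_, by rw [hVl2, ← hUl2, ← hq]⟩
        simp [hVl]
      | cons r0 rs =>
        rw [List.getLast?_cons_cons] at hlast
        rw [hlast]
        exact ⟨qU, rfl, hUl2⟩
end
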